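/- arXiv:2402.13407 — 3 statements merged into one kernel-verified Lean document; each statement's English description precedes it below -/
import Mathlib

section
/- Let 0 < a < 1, κ > 0 with a + κ < 1 and (2κ+1)^2 > 8a(1-a+κ). Then the two roots x_± = (2κ+1 ± √((2κ+1)^2 - 8a(1-a+κ)))/(4a) satisfy 2κ/(2κ+1) < x_- and x_- < 2(1-a+κ)/(2κ+1) < x_+. -/
theorem stmt_1 (a κ : ℝ) (ha : 0 < a) (ha1 : a < 1) (hκ : 0 < κ)
    (hak : a + κ < 1)
    (hcond : (2 * κ + 1) ^ 2 > 8 * a * (1 - a + κ)) :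
    ∀ xp xm : ℝ,
      xp = (2 * κ + 1 + Real.sqrt ((2 * κ + 1) ^ 2 - 8 * a * (1 - a + κ))) / (4 * a) →
      xm = (2 * κ + 1 - Real.sqrt ((2 * κ + 1) ^ 2 - 8 * a * (1 - a + κ))) / (4 * a) →
      (2 * κ / (2 * κ + 1) < xm ∧
       xm < 2 * (1 - a + κ) / (2 * κ + 1) ∧
       2 * (1 - a + κ) / (2 * κ + 1) < xp) := by
  intro xp xm hxp hxm
  have hDpos : 0 < (2 * κ + 1) ^ 2 - 8 * a * (1 - a + κ) := by linarith
  set s := Real.sqrt ((2 * κ + 1) ^ 2 - 8 * a * (1 - a + κ)) with hsdef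
  have hs : 0 < s := Real.sqrt_pos.mpr hDpos
  have hs2 : s ^ 2 = (2 * κ + 1) ^ 2 - 8 * a * (1 - a + κ) := Real.sq_sqrt hDpos.le
  subst hxp hxm
  have h4a : (0:ℝ) < 4 * a := by linarith
  have hk1 : (0:ℝ) < 2 * κ + 1 := by linarith
  refine ⟨?_, ?_, ?_⟩
  · rw [div_lt_div_iff₀ hk1 h4a]
    have hv : 0 < (2 * κ + 1) ^ 2 - 8 * a * κ := by
      nlinarith [sq_nonneg (2 * κ - 2 * a + 1), mul_pos ha (sub_pos.mpr ha1)]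
    have key : (2 * κ + 1) * s < (2 * κ + 1) ^ 2 - 8 * a * κ := by
      nlinarith [mul_pos hk1 hs, mul_pos (mul_pos ha hk1) (sub_pos.mpr hak),
        sq_nonneg (a * κ)]
    nlinarith
  · rw [div_lt_div_iff₀ h4a hk1]
    have hlt : s < 2 * κ + 1 := by
      nlinarith [mul_pos (mul_pos ha (by linarith : (0:ℝ) < 8)) (by nlinarith : (0:ℝ) < 1 - a + κ)]
    nlinarith
  · rw [div_lt_div_iff₀ hk1 h4a]
    nlinarith [mul_pos hk1 hs]
end

section
/- Let d, n > 0 and 0 < κ ≤ 1/2 with S := d(1 - κ n/d) defined so that d - S = κ n (i.e., tr Cas = κ n < n/2). Define f(z) = ((d+n)z^4 + 2(2d+n-S)z^2 + (d+n))/(4z(z^2+1)) · (2z/(z^2+1))^(d/(2n+d)) for z > 0. Then f'(1) = 0 and f''(1) = -(d+n)(d-2n-S)/(4n+2d) > 0, and z = 1 is the unique critical point of f on (0,∞); moreover f(z) → ∞ as z → 0⁺ and as z → ∞. In particular z = 1 is a global minimum of f. -/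
set_option maxHeartbeats 1000000


open Filter Topology

theorem stmt_6 (d n κ S : ℝ) (hd : 0 < d) (hn : 0 < n)
    (hκ : 0 < κ) (hκh : κ ≤ 1 / 2) (hS : d - S = κ * n)
    (f : ℝ → ℝ)
    (hf : ∀ z : ℝ, f z = ((d + n) * z ^ 4 + 2 * (2 * d + n - S) * z ^ 2 + (d + n))
        / (4 * z * (z ^ 2 + 1)) * ((2 * z / (z ^ 2 + 1)) ^ (d / (2 * n + d)) : ℝ)) :
    deriv f 1 = 0 ∧
    deriv (deriv f) 1 = -((d + n) * (d - 2 * n - S)) / (4 * n + 2 * d) ∧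
    0 < deriv (deriv f) 1 ∧
    (∀ z : ℝ, 0 < z → deriv f z = 0 → z = 1) ∧
    Tendsto f (𝓝[>] 0) atTop ∧
    Tendsto f atTop atTop ∧
    (∀ z : ℝ, 0 < z → f 1 ≤ f z) := by
  have hSv : S = d - κ * n := by linarith
  subst hSv
  have hnd : (0:ℝ) < 2 * n + d := by linarith
  have ha : (0:ℝ) < d + n := by linarith
  have hc : (0:ℝ) < 2 * d + n - (d - κ * n) := by nlinarith
  have hκ2 : (0:ℝ) < 1 - κ := by linarith
  set k : ℝ := 2 * n * (d + n) / (2 * n + d) with hkdef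
  have hkpos : 0 < k := by rw [hkdef]; positivity
  set R : ℝ → ℝ := fun z => (z ^ 4 + 2 * (1 - κ) * z ^ 2 + 1) /
      (z * (z ^ 2 + 1) * ((d + n) * z ^ 4 + 2 * (2 * d + n - (d - κ * n)) * z ^ 2 + (d + n)))
    with hRdef
  set G : ℝ → ℝ := fun z => k * (z ^ 2 - 1) * R z with hGdef
  have hPpos : ∀ z : ℝ, 0 < z →
      0 < (d + n) * z ^ 4 + 2 * (2 * d + n - (d - κ * n)) * z ^ 2 + (d + n) := by
    intro z hz
    nlinarith [mul_pos ha (pow_pos hz 4), mul_pos hc (pow_pos hz 2)]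
  have hQpos : ∀ z : ℝ, 0 < z → 0 < z ^ 4 + 2 * (1 - κ) * z ^ 2 + 1 := by
    intro z hz
    nlinarith [pow_pos hz 4, mul_pos hκ2 (pow_pos hz 2)]
  have hRpos : ∀ z : ℝ, 0 < z → 0 < R z := by
    intro z hz
    rw [hRdef]
    exact div_pos (hQpos z hz)
      (mul_pos (mul_pos hz (by positivity)) (hPpos z hz))
  have hfpos : ∀ z : ℝ, 0 < z → 0 < f z := by
    intro z hz
    rw [hf]
    exact mul_pos (div_pos (hPpos z hz) (by positivity))
      (Real.rpow_pos_of_pos (by positivity) _)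
  have hfE : f = fun t : ℝ =>
      ((d + n) * t ^ 4 + 2 * (2 * d + n - (d - κ * n)) * t ^ 2 + (d + n)) /
        (4 * t * (t ^ 2 + 1)) * ((2 * t / (t ^ 2 + 1)) ^ (d / (2 * n + d))) := funext hf
  -- the key derivative computation
  have hder : ∀ z : ℝ, 0 < z → HasDerivAt f (f z * G z) z := by
    intro z hz
    have hz1 : (0:ℝ) < z ^ 2 + 1 := by positivity
    have hDne : 4 * z * (z ^ 2 + 1) ≠ 0 := by positivity
    have hvpos : (0:ℝ) < 2 * z / (z ^ 2 + 1) := by positivity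
    have hP4 : HasDerivAt (fun t : ℝ => (d + n) * t ^ 4) ((d + n) * (4 * z ^ 3)) z := by
      simpa using (hasDerivAt_pow 4 z).const_mul (d + n)
    have hP2 : HasDerivAt (fun t : ℝ => 2 * (2 * d + n - (d - κ * n)) * t ^ 2)
        (2 * (2 * d + n - (d - κ * n)) * (2 * z)) z := by
      simpa using (hasDerivAt_pow 2 z).const_mul (2 * (2 * d + n - (d - κ * n)))
    have hP : HasDerivAt
        (fun t : ℝ => (d + n) * t ^ 4 + 2 * (2 * d + n - (d - κ * n)) * t ^ 2 + (d + n))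
        ((d + n) * (4 * z ^ 3) + 2 * (2 * d + n - (d - κ * n)) * (2 * z)) z :=
      (hP4.add hP2).add_const (d + n)
    have hD1 : HasDerivAt (fun t : ℝ => 4 * t) 4 z := by
      simpa using (hasDerivAt_id z).const_mul 4
    have hD2 : HasDerivAt (fun t : ℝ => t ^ 2 + 1) (2 * z) z := by
      simpa using (hasDerivAt_pow 2 z).add_const 1
    have hDD : HasDerivAt (fun t : ℝ => 4 * t * (t ^ 2 + 1))
        (4 * (z ^ 2 + 1) + 4 * z * (2 * z)) z := hD1.mul hD2
    have hu := hP.div hDD hDne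
    have hv1 : HasDerivAt (fun t : ℝ => 2 * t) 2 z := by
      simpa using (hasDerivAt_id z).const_mul 2
    have hv : HasDerivAt (fun t : ℝ => 2 * t / (t ^ 2 + 1))
        ((2 * (z ^ 2 + 1) - 2 * z * (2 * z)) / (z ^ 2 + 1) ^ 2) z :=
      hv1.div hD2 (ne_of_gt hz1)
    have hw := hv.rpow_const (p := d / (2 * n + d)) (Or.inl (ne_of_gt hvpos))
    have hmain := hu.mul hw
    rw [hfE]
    refine hmain.congr_deriv ?_
    simp only [hGdef, hRdef, hkdef, Pi.div_apply]
    rw [Real.rpow_sub hvpos, Real.rpow_one]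
    have hPne : ((d + n) * z ^ 4 + 2 * (2 * d + n - (d - κ * n)) * z ^ 2 + (d + n)) ≠ 0 :=
      ne_of_gt (hPpos z hz)
    generalize (2 * z / (z ^ 2 + 1)) ^ (d / (2 * n + d)) = E
    have hPne' : z ^ 2 * ((d + n) * z ^ 2 + 2 * (d * 2 + n - (d - n * κ))) + (d + n) ≠ 0 := by
      convert hPne using 1; ring
    field_simp [hz.ne', hz1.ne', hPne, hnd.ne']
    ring
  -- first derivative at 1 vanishes
  have hd1 : deriv f 1 = 0 := by
    rw [(hder 1 one_pos).deriv, hGdef]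
    norm_num
  -- second derivative
  have hG1 : G 1 = 0 := by rw [hGdef]; norm_num
  have hRd1 : DifferentiableAt ℝ R 1 := by
    rw [hRdef]
    apply DifferentiableAt.div
    · fun_prop
    · fun_prop
    · show (1:ℝ) * ((1:ℝ) ^ 2 + 1) * ((d + n) * (1:ℝ) ^ 4 + 2 * (2 * d + n - (d - κ * n)) * (1:ℝ) ^ 2 + (d + n)) ≠ 0
      have := hPpos 1 one_pos
      norm_num at this ⊢
      positivity
  have hGd : HasDerivAt G (k * 2 * R 1) 1 := by
    have h1 : HasDerivAt (fun t : ℝ => k * (t ^ 2 - 1)) (k * (2 * 1)) 1 := by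
      simpa using ((hasDerivAt_pow 2 (1:ℝ)).sub_const 1).const_mul k
    have h2 := h1.mul hRd1.hasDerivAt
    rw [hGdef]
    refine h2.congr_deriv ?_
    norm_num
  have hFG : HasDerivAt (fun z => f z * G z)
      (f 1 * G 1 * G 1 + f 1 * (k * 2 * R 1)) 1 := (hder 1 one_pos).mul hGd
  have hev : deriv f =ᶠ[𝓝 1] fun z => f z * G z := by
    filter_upwards [Ioi_mem_nhds (zero_lt_one (α := ℝ))] with z hz
    exact (hder z hz).deriv
  have hd2 : deriv (deriv f) 1 = f 1 * (k * 2 * R 1) := by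
    have := (hFG.congr_of_eventuallyEq hev).deriv
    rw [this, hG1]
    ring
  have hf1 : f 1 = ((d + n) + 2 * (2 * d + n - (d - κ * n)) + (d + n)) / 8 := by
    rw [hf]
    norm_num
  have hR1 : R 1 = (1 + 2 * (1 - κ) + 1) /
      (2 * ((d + n) + 2 * (2 * d + n - (d - κ * n)) + (d + n))) := by
    rw [hRdef]
    norm_num
  have hPne1 : ((d + n) + 2 * (2 * d + n - (d - κ * n)) + (d + n)) ≠ 0 := by positivity
  have hd2v : deriv (deriv f) 1 = -((d + n) * (d - 2 * n - (d - κ * n))) / (4 * n + 2 * d) := by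
    rw [hd2, hf1, hR1, hkdef]
    field_simp
    rw [div_eq_iff (ne_of_gt (by nlinarith [mul_pos hn hκ]))]
    ring
  have hd2pos : 0 < deriv (deriv f) 1 := by
    rw [hd2v]
    apply div_pos
    · nlinarith [mul_pos ha (show (0:ℝ) < 2 * n - κ * n by nlinarith)]
    · linarith
  -- uniqueness of critical point
  have huniq : ∀ z : ℝ, 0 < z → deriv f z = 0 → z = 1 := by
    intro z hz hdz
    rw [(hder z hz).deriv] at hdz
    have hGz : G z = 0 := by
      rcases mul_eq_zero.mp hdz with h | h
      · exact absurd h (ne_of_gt (hfpos z hz))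
      · exact h
    rw [hGdef] at hGz
    have hsq : z ^ 2 - 1 = 0 := by
      rcases mul_eq_zero.mp hGz with h | h
      · rcases mul_eq_zero.mp h with h' | h'
        · exact absurd h' (ne_of_gt hkpos)
        · exact h'
      · exact absurd h (ne_of_gt (hRpos z hz))
    have : (z - 1) * (z + 1) = 0 := by linear_combination hsq
    rcases mul_eq_zero.mp this with h | h
    · linarith
    · linarith
  -- symmetry f(1/z) = f(z)
  have hsym : ∀ z : ℝ, 0 < z → f (1 / z) = f z := by
    intro z hz
    rw [hf, hf]
    have hz1 : (0:ℝ) < z ^ 2 + 1 := by positivity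
    have hb : 2 * (1 / z) / ((1 / z) ^ 2 + 1) = 2 * z / (z ^ 2 + 1) := by
      rw [div_eq_div_iff (by positivity) (by positivity)]
      field_simp
      ring
    rw [hb]
    congr 1
    rw [div_eq_div_iff (by positivity) (by positivity)]
    field_simp
    ring
  -- tendsto atTop
  have hlim : Tendsto f atTop atTop := by
    have h1α : (0:ℝ) < 1 - d / (2 * n + d) := by
      have : d / (2 * n + d) < 1 := (div_lt_one hnd).mpr (by linarith)
      linarith
    have htend : Tendsto (fun z : ℝ => (d + n) / 8 * z ^ (1 - d / (2 * n + d))) atTop atTop :=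
      (tendsto_rpow_atTop h1α).const_mul_atTop (by positivity)
    apply tendsto_atTop_mono' atTop _ htend
    filter_upwards [eventually_ge_atTop (1:ℝ)] with z hz1
    have hz : (0:ℝ) < z := by linarith
    have hz2 : (0:ℝ) < z ^ 2 + 1 := by positivity
    rw [hf]
    have hA : (d + n) / 8 * z ≤
        ((d + n) * z ^ 4 + 2 * (2 * d + n - (d - κ * n)) * z ^ 2 + (d + n)) /
          (4 * z * (z ^ 2 + 1)) := by
      rw [le_div_iff₀ (by positivity)]
      nlinarith [mul_pos hc (pow_pos hz 2), mul_nonneg (le_of_lt ha)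
        (mul_nonneg (sq_nonneg z) (show (0:ℝ) ≤ z ^ 2 - 1 by nlinarith))]
    have hB : 1 / z ≤ 2 * z / (z ^ 2 + 1) := by
      rw [div_le_div_iff₀ hz hz2]
      nlinarith
    have hBr : (1 / z) ^ (d / (2 * n + d)) ≤ (2 * z / (z ^ 2 + 1)) ^ (d / (2 * n + d)) :=
      Real.rpow_le_rpow (by positivity) hB (by positivity)
    have key : (d + n) / 8 * z ^ (1 - d / (2 * n + d)) =
        ((d + n) / 8 * z) * ((1 / z) ^ (d / (2 * n + d))) := by
      rw [one_div, Real.inv_rpow hz.le, Real.rpow_sub hz, Real.rpow_one]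
      ring
    rw [key]
    exact mul_le_mul hA hBr (by positivity) (le_trans (by positivity) hA)
  -- tendsto at 0+
  have hlim0 : Tendsto f (𝓝[>] 0) atTop := by
    have hcomp : Tendsto (fun z : ℝ => f z⁻¹) (𝓝[>] (0:ℝ)) atTop :=
      hlim.comp tendsto_inv_nhdsGT_zero
    apply hcomp.congr'
    filter_upwards [self_mem_nhdsWithin] with z hz
    have := hsym z hz
    rw [one_div] at this
    exact this
  -- global minimum
  have hcont : ContinuousOn f (Set.Ici 1) := fun x hx =>
    ((hder x (lt_of_lt_of_le one_pos hx)).continuousAt).continuousWithinAt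
  have hmono : StrictMonoOn f (Set.Ici 1) := by
    apply strictMonoOn_of_deriv_pos (convex_Ici 1) hcont
    intro x hx
    rw [interior_Ici] at hx
    have hx0 : (0:ℝ) < x := lt_trans one_pos hx
    rw [(hder x hx0).deriv]
    apply mul_pos (hfpos x hx0)
    rw [hGdef]
    have h1x : (1:ℝ) < x := Set.mem_Ioi.mp hx
    exact mul_pos (mul_pos hkpos (by nlinarith)) (hRpos x hx0)
  have hmin : ∀ z : ℝ, 0 < z → f 1 ≤ f z := by
    intro z hz
    rcases le_or_gt 1 z with h | h
    · exact hmono.monotoneOn Set.self_mem_Ici h h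
    · have h1z : (1:ℝ) ≤ 1 / z := by
        rw [le_div_iff₀ hz]; linarith
      calc f 1 ≤ f (1 / z) := hmono.monotoneOn Set.self_mem_Ici h1z h1z
        _ = f z := hsym z hz
  exact ⟨hd1, hd2v, hd2pos, huniq, hlim0, hlim, hmin⟩
end

section
/- Let n, d > 0, 0 < a < 1, κ = d(1-a)/n with κ ≤ 1/2 and a + κ < 1, and suppose (2κ+1)^2 > 8a(1-a+κ). Let x_± be the roots of 2ax^2 - (2κ+1)x + (1-a+κ) = 0 with x_- < x_+. Then for both signs, the inequality λ_1^± := κ/(2x_±^2) < 2ρ^± := ((2κ+1)x_± - κ)/(2x_±^2) holds, i.e., 2κ/(2κ+1) < x_-. -/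
theorem stmt_12 (n d a κ : ℝ) (hn : 0 < n) (hd : 0 < d) (ha : 0 < a) (ha1 : a < 1)
    (hκ : κ = d * (1 - a) / n) (hκh : κ ≤ 1 / 2) (hak : a + κ < 1)
    (hcond : (2 * κ + 1) ^ 2 > 8 * a * (1 - a + κ))
    (xp xm : ℝ)
    (hxp : xp = (2 * κ + 1 + Real.sqrt ((2 * κ + 1) ^ 2 - 8 * a * (1 - a + κ))) / (4 * a))
    (hxm : xm = (2 * κ + 1 - Real.sqrt ((2 * κ + 1) ^ 2 - 8 * a * (1 - a + κ))) / (4 * a)) :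
    κ / (2 * xp ^ 2) < ((2 * κ + 1) * xp - κ) / (2 * xp ^ 2) ∧
    κ / (2 * xm ^ 2) < ((2 * κ + 1) * xm - κ) / (2 * xm ^ 2) ∧
    2 * κ / (2 * κ + 1) < xm := by
  have hκpos : 0 < κ := by
    rw [hκ]
    have : 0 < 1 - a := by linarith
    positivity
  have hDpos : 0 < (2 * κ + 1) ^ 2 - 8 * a * (1 - a + κ) := by linarith
  set s : ℝ := Real.sqrt ((2 * κ + 1) ^ 2 - 8 * a * (1 - a + κ)) with hsdef
  have hs_nonneg : 0 ≤ s := Real.sqrt_nonneg _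
  have hs2 : s ^ 2 = (2 * κ + 1) ^ 2 - 8 * a * (1 - a + κ) := Real.sq_sqrt hDpos.le
  -- key: (2κ+1) * s < (2κ+1)^2 - 8aκ
  have hB : 0 < (2 * κ + 1) ^ 2 - 8 * a * κ + (2 * κ + 1) * s := by nlinarith
  have hAB : 0 < ((2 * κ + 1) ^ 2 - 8 * a * κ - (2 * κ + 1) * s) *
      ((2 * κ + 1) ^ 2 - 8 * a * κ + (2 * κ + 1) * s) := by
    have hident : ((2 * κ + 1) ^ 2 - 8 * a * κ - (2 * κ + 1) * s) *
        ((2 * κ + 1) ^ 2 - 8 * a * κ + (2 * κ + 1) * s)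
        = 8 * a * ((1 - a - κ) * (2 * κ + 1) ^ 2 + 8 * a * κ ^ 2) := by
      linear_combination (-(2 * κ + 1) ^ 2) * hs2
    rw [hident]
    have h1 : 0 < 1 - a - κ := by linarith
    positivity
  have hA : 0 < (2 * κ + 1) ^ 2 - 8 * a * κ - (2 * κ + 1) * s := by
    nlinarith [hAB, hB]
  have hkey : 2 * κ / (2 * κ + 1) < xm := by
    rw [hxm, div_lt_div_iff₀ (by linarith) (by linarith)]
    nlinarith
  have hxm_pos : 0 < xm := lt_trans (by positivity) hkey
  have h2m : 2 * κ < (2 * κ + 1) * xm := by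
    rw [div_lt_iff₀ (by linarith)] at hkey
    linarith
  have hxp_ge : xm ≤ xp := by
    rw [hxp, hxm]
    exact div_le_div_of_nonneg_right (by linarith) (by linarith)
  have hxp_pos : 0 < xp := lt_of_lt_of_le hxm_pos hxp_ge
  have h2p : 2 * κ < (2 * κ + 1) * xp := by nlinarith
  refine ⟨?_, ?_, hkey⟩
  · exact (div_lt_div_iff_of_pos_right (by positivity)).mpr (by linarith)
  · exact (div_lt_div_iff_of_pos_right (by positivity)).mpr (by linarith)
end
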